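/- Rigidity of the antiflat order for binary spectra: let r ∈ (1/2, 1) and x ∈ [1/2, 1]. If for all 0 < α < β one has Sb α x - Sb β x ≥ Sb α r - Sb β r (the binary spectrum (x, 1-x) antiflat-majorizes the target (r, 1-r)), then x = r. -/

import Mathlib

open Real Filter Topology


/-- Rényi entropy of the binary probability vector `(x, 1 - x)`
(Shannon entropy at `α = 1`; powers are `Real.rpow`). -/
noncomputable def Sb (α x : ℝ) : ℝ :=
  if α = 1 then -(x * Real.log x + (1 - x) * Real.log (1 - x))
  else (1 - α)⁻¹ * Real.log (x ^ α + (1 - x) ^ α)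

lemma Sb_of_ne (α x : ℝ) (hα : α ≠ 1) :
    Sb α x = (1 - α)⁻¹ * Real.log (x ^ α + (1 - x) ^ α) := by
  simp [Sb, hα]

lemma Sb_one_arg (α : ℝ) (hα : 0 < α) : Sb α 1 = 0 := by
  rcases eq_or_ne α 1 with rfl | hα1
  · simp [Sb]
  · simp [Sb, hα1, Real.zero_rpow hα.ne']

lemma Sb_eq (α t : ℝ) (ht0 : 0 < t) (ht1 : t < 1) (hα : α ≠ 1) :
    Sb α t = (1 - α)⁻¹ * (α * Real.log t + Real.log (1 + ((1 - t) / t) ^ α)) := by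
  have h1t : 0 < 1 - t := by linarith
  have hu : 0 < (1 - t) / t := div_pos h1t ht0
  have key : t ^ α + (1 - t) ^ α = t ^ α * (1 + ((1 - t) / t) ^ α) := by
    have hmul : t ^ α * ((1 - t) / t) ^ α = (1 - t) ^ α := by
      rw [← Real.mul_rpow ht0.le (div_nonneg h1t.le ht0.le)]
      congr 1
      field_simp
    rw [mul_add, mul_one, hmul]
  rw [Sb_of_ne _ _ hα, key, Real.log_mul (by positivity) (by positivity),
    Real.log_rpow ht0]

lemma tendsto_Sb_zero (t : ℝ) (ht0 : 0 < t) (ht1 : t < 1) :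
    Tendsto (fun α => Sb α t) (𝓝[>] (0:ℝ)) (𝓝 (Real.log 2)) := by
  have h1t : 0 < 1 - t := by linarith
  have h1 : Tendsto (fun α : ℝ => t ^ α + (1 - t) ^ α) (𝓝 0) (𝓝 2) := by
    have ha := (Real.continuousAt_const_rpow (a := t) (b := 0) ht0.ne').tendsto
    have hb := (Real.continuousAt_const_rpow (a := 1 - t) (b := 0) h1t.ne').tendsto
    rw [Real.rpow_zero] at ha hb
    have := ha.add hb
    norm_num at this
    exact this
  have h2 : Tendsto (fun α : ℝ => Real.log (t ^ α + (1 - t) ^ α)) (𝓝 0)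
      (𝓝 (Real.log 2)) := (Real.continuousAt_log (by norm_num)).tendsto.comp h1
  have h3 : Tendsto (fun α : ℝ => (1 - α)⁻¹) (𝓝 0) (𝓝 1) := by
    have : ContinuousAt (fun α : ℝ => (1 - α)⁻¹) 0 :=
      ((continuous_const.sub continuous_id).continuousAt).inv₀ (by norm_num)
    simpa using this.tendsto
  have h4 : Tendsto (fun α : ℝ => (1 - α)⁻¹ * Real.log (t ^ α + (1 - t) ^ α))
      (𝓝 0) (𝓝 (Real.log 2)) := by simpa using h3.mul h2
  have h5 := h4.mono_left (nhdsWithin_le_nhds (s := Set.Ioi (0:ℝ)))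
  refine h5.congr' ?_
  have hev : ∀ᶠ α in 𝓝[>] (0:ℝ), α < 1 :=
    (isOpen_Iio.eventually_mem (show (0:ℝ) ∈ Set.Iio 1 by norm_num)).filter_mono
      nhdsWithin_le_nhds
  filter_upwards [hev] with α hα
  rw [Sb_of_ne _ _ hα.ne]

lemma tendsto_Sb_atTop (t : ℝ) (ht0 : 1/2 < t) (ht1 : t < 1) :
    Tendsto (fun β => Sb β t) atTop (𝓝 (-Real.log t)) := by
  have htpos : 0 < t := by linarith
  have h1t : 0 < 1 - t := by linarith
  set u := (1 - t) / t with hu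
  have hu0 : 0 < u := div_pos h1t htpos
  have hu1 : u < 1 := by rw [hu, div_lt_one htpos]; linarith
  have hL : Tendsto (fun β : ℝ => Real.log (1 + u ^ β)) atTop (𝓝 0) := by
    have h0 : Tendsto (fun β : ℝ => u ^ β) atTop (𝓝 0) :=
      tendsto_rpow_atTop_of_base_lt_one u (by linarith) hu1
    have hc : ContinuousAt (fun y : ℝ => Real.log (1 + y)) 0 :=
      (Real.continuousAt_log (by norm_num)).comp (by fun_prop)
    have := hc.tendsto.comp h0
    norm_num at this
    exact this
  have hinv : Tendsto (fun β : ℝ => (1 - β)⁻¹) atTop (𝓝 0) := by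
    have h := (tendsto_inv_atTop_zero.comp
      (tendsto_atTop_add_const_right atTop (-1:ℝ) tendsto_id)).neg
    norm_num at h
    refine h.congr (fun β => ?_)
    rw [← inv_neg]
    congr 1
    ring
  have hcoef : Tendsto (fun β : ℝ => β * (1 - β)⁻¹) atTop (𝓝 (-1)) := by
    have h := tendsto_const_nhds.add hinv (f := fun _ : ℝ => (-1 : ℝ))
    norm_num at h
    refine h.congr' ?_
    filter_upwards [eventually_gt_atTop (1:ℝ)] with β hβ
    have : (1 - β) ≠ 0 := by linarith
    field_simp
    ring
  have hmain : Tendsto (fun β : ℝ =>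
      (β * (1 - β)⁻¹) * Real.log t + (1 - β)⁻¹ * Real.log (1 + u ^ β)) atTop
      (𝓝 (-Real.log t)) := by
    have := (hcoef.mul_const (Real.log t)).add (hinv.mul hL)
    norm_num at this
    exact this
  refine hmain.congr' ?_
  filter_upwards [eventually_gt_atTop (1:ℝ)] with β hβ
  rw [Sb_eq _ _ htpos ht1 hβ.ne', ← hu]
  ring

/-- Rigidity of the antiflat order for binary spectra. -/
theorem binary_antiflat_rigidity (r x : ℝ)
    (hr : r ∈ Set.Ioo (1 / 2 : ℝ) 1) (hx : x ∈ Set.Icc (1 / 2 : ℝ) 1)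
    (h : ∀ α β : ℝ, 0 < α → α < β → Sb α r - Sb β r ≤ Sb α x - Sb β x) :
    x = r := by
  obtain ⟨hr1, hr2⟩ := hr
  obtain ⟨hx1, hx2⟩ := hx
  have hrpos : 0 < r := by linarith
  have hxpos : 0 < x := by linarith
  have key : ∀ α β : ℝ, 0 < α → α < β →
      Sb β x - Sb β r ≤ Sb α x - Sb α r := by
    intro α β hα hαβ
    have := h α β hα hαβ
    linarith
  have hlog2 : -Real.log r < Real.log 2 := by
    have h1 : Real.log (1/2) < Real.log r := Real.log_lt_log (by norm_num) hr1
    have h2 : Real.log (1/2 : ℝ) = -Real.log 2 := by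
      rw [show (1/2 : ℝ) = 2⁻¹ by norm_num, Real.log_inv]
    linarith
  have hfrtop := tendsto_Sb_atTop r hr1 hr2
  rcases hx2.eq_or_lt with hxeq | hxlt1
  · -- x = 1 : contradiction
    exfalso
    -- Sb α r ≤ Sb β r for α < β
    have mono : ∀ α β : ℝ, 0 < α → α < β → Sb α r ≤ Sb β r := by
      intro α β hα hαβ
      have := key α β hα hαβ
      rw [hxeq, Sb_one_arg α hα, Sb_one_arg β (hα.trans hαβ)] at this
      linarith
    have stepA : ∀ α : ℝ, 0 < α → Sb α r ≤ -Real.log r := by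
      intro α hα
      refine ge_of_tendsto hfrtop ?_
      filter_upwards [eventually_gt_atTop α] with β hβ
      exact mono α β hα hβ
    have stepB : Real.log 2 ≤ -Real.log r := by
      refine le_of_tendsto (tendsto_Sb_zero r hrpos hr2) ?_
      filter_upwards [self_mem_nhdsWithin] with α hα
      exact stepA α hα
    linarith
  · -- x < 1
    -- Step 1 : x ≥ r
    have hf0 : Tendsto (fun α => Sb α x - Sb α r) (𝓝[>] (0:ℝ)) (𝓝 0) := by
      have := (tendsto_Sb_zero x hxpos hxlt1).sub (tendsto_Sb_zero r hrpos hr2)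
      simpa using this
    have hf2 : Sb 2 x - Sb 2 r ≤ 0 := by
      refine ge_of_tendsto hf0 ?_
      have hev : ∀ᶠ α in 𝓝[>] (0:ℝ), α < 2 :=
        (isOpen_Iio.eventually_mem (show (0:ℝ) ∈ Set.Iio 2 by norm_num)).filter_mono
          (nhdsWithin_le_nhds (s := Set.Ioi (0:ℝ)))
      filter_upwards [self_mem_nhdsWithin, hev] with α hα hα2
      exact key α 2 hα hα2
    have hSb2 : ∀ t : ℝ, Sb 2 t = -Real.log (t^2 + (1-t)^2) := by
      intro t
      rw [Sb_of_ne 2 t (by norm_num)]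
      rw [show ((2:ℝ)) = ((2:ℕ):ℝ) by norm_num, Real.rpow_natCast, Real.rpow_natCast]
      norm_num
    have hq : r^2 + (1-r)^2 ≤ x^2 + (1-x)^2 := by
      rw [hSb2 x, hSb2 r] at hf2
      have hlogle : Real.log (r^2 + (1-r)^2) ≤ Real.log (x^2 + (1-x)^2) := by linarith
      by_contra hcon
      push_neg at hcon
      have := Real.log_lt_log (by nlinarith) hcon
      linarith
    have hxr : r ≤ x := by nlinarith
    have hxgt : 1/2 < x := lt_of_lt_of_le hr1 hxr
    -- Step 2 : x ≤ r
    have hflim : Tendsto (fun β => Sb β x - Sb β r) atTop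
        (𝓝 (Real.log r - Real.log x)) := by
      have := (tendsto_Sb_atTop x hxgt hxlt1).sub hfrtop
      rw [show -Real.log x - -Real.log r = Real.log r - Real.log x by ring] at this
      exact this
    have hlow : ∀ α : ℝ, 0 < α →
        Real.log r - Real.log x ≤ Sb α x - Sb α r := by
      intro α hα
      refine le_of_tendsto hflim ?_
      filter_upwards [eventually_gt_atTop α] with β hβ
      exact key α β hα hβ
    set c := Real.log r - Real.log x with hc
    have hG : ∀ α : ℝ, 1 < α →
        Real.log (1 + ((1-x)/x) ^ α) - Real.log (1 + ((1-r)/r) ^ α) ≤ c := by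
      intro α hα
      have hα0 : 0 < α := by linarith
      have hd : 1 - α < 0 := by linarith
      have hne : (1 - α) ≠ 0 := by linarith
      have h1 := hlow α hα0
      rw [Sb_eq α x hxpos hxlt1 (by linarith), Sb_eq α r hrpos hr2 (by linarith)] at h1
      set Lx := Real.log (1 + ((1-x)/x) ^ α)
      set Lr := Real.log (1 + ((1-r)/r) ^ α)
      have h2 : c ≤ (1-α)⁻¹ * ((α * Real.log x + Lx) - (α * Real.log r + Lr)) := by
        rw [mul_sub] at *
        linarith
      have h3 := mul_le_mul_of_nonpos_left h2 hd.le
      rw [← mul_assoc, mul_inv_cancel₀ hne, one_mul] at h3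
      have hcval : (1-α) * c = c + α * Real.log x - α * Real.log r := by
        rw [hc]; ring
      nlinarith [h3, hcval]
    have hGlim : Tendsto (fun α : ℝ =>
        Real.log (1 + ((1-x)/x) ^ α) - Real.log (1 + ((1-r)/r) ^ α)) atTop (𝓝 0) := by
      have haux : ∀ t : ℝ, 1/2 < t → t < 1 →
          Tendsto (fun α : ℝ => Real.log (1 + ((1-t)/t) ^ α)) atTop (𝓝 0) := by
        intro t ht0 ht1
        have htpos : 0 < t := by linarith
        have hu1 : (1-t)/t < 1 := by rw [div_lt_one htpos]; linarith
        have hu0 : 0 < (1-t)/t := div_pos (by linarith) htpos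
        have h0 : Tendsto (fun α : ℝ => ((1-t)/t) ^ α) atTop (𝓝 0) :=
          tendsto_rpow_atTop_of_base_lt_one _ (by linarith) hu1
        have hcont : ContinuousAt (fun y : ℝ => Real.log (1 + y)) 0 :=
          (Real.continuousAt_log (by norm_num)).comp (by fun_prop)
        have := hcont.tendsto.comp h0
        norm_num at this
        exact this
      have := (haux x hxgt hxlt1).sub (haux r hr1 hr2)
      simpa using this
    have hc0 : 0 ≤ c := by
      refine le_of_tendsto hGlim ?_
      filter_upwards [eventually_gt_atTop (1:ℝ)] with α hα
      exact hG α hα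
    have hrx : x ≤ r := by
      by_contra hcon
      push_neg at hcon
      have := Real.log_lt_log hrpos hcon
      rw [hc] at hc0
      linarith
    linarith
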